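/- Let x ∈ ℝ^d and 0 < t < s, and define h_{s,t,x}(y) = ∫_{|y−x|}^∞ (W(r/t) − W(r/s))/(C_d r^{d−1}) dr, where W(r) = min{1, r^d}. Then ∫_{ℝ^d} h_{s,t,x}(y) dy = (s² − t²)/(2(d+2)). -/

import Mathlib

open MeasureTheory Metric Filter Real
open scoped ENNReal Topology

noncomputable section

/-- Euclidean space `ℝ^d`. -/
abbrev Euc (d : ℕ) := EuclideanSpace ℝ (Fin d)

/-- `C_d = 2π^{d/2}/Γ(d/2)`, the surface area of the unit sphere in `ℝ^d`. -/
noncomputable def Cd (d : ℕ) : ℝ := 2 * π ^ ((d : ℝ) / 2) / Real.Gamma ((d : ℝ) / 2)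

/-- `W(r) = min {1, r^d}`. -/
def W (d : ℕ) (r : ℝ) : ℝ := min 1 (r ^ d)

/-- `h_{s,t,x}(y) = ∫_{|y−x|}^∞ (W(r/t) − W(r/s))/(C_d r^{d−1}) dr`. -/
noncomputable def hst (d : ℕ) (s t : ℝ) (x y : Euc d) : ℝ :=
  ∫ r in Set.Ioi (dist y x), (W d (r / t) - W d (r / s)) / (Cd d * r ^ (d - 1))

lemma myW_eq_pow {d : ℕ} {z : ℝ} (h0 : 0 ≤ z) (h1 : z ≤ 1) : W d z = z ^ d :=
  min_eq_right (pow_le_one₀ h0 h1)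

lemma myW_eq_one {d : ℕ} {z : ℝ} (h1 : 1 ≤ z) : W d z = 1 :=
  min_eq_left (one_le_pow₀ h1)

lemma myW_nonneg {d : ℕ} {z : ℝ} (h0 : 0 ≤ z) : 0 ≤ W d z :=
  le_min zero_le_one (pow_nonneg h0 d)

lemma myCd_pos (d : ℕ) (hd : 1 ≤ d) : 0 < Cd d := by
  have h2 : 0 < (d : ℝ) / 2 := by
    have : (0:ℝ) < d := by exact_mod_cast hd
    positivity
  have hG := Real.Gamma_pos_of_pos h2
  have hpi : (0:ℝ) < π ^ ((d : ℝ) / 2) := Real.rpow_pos_of_pos Real.pi_pos _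
  unfold Cd
  positivity

lemma myW_cont (d : ℕ) (a : ℝ) : Continuous fun u : ℝ => W d (u / a) :=
  continuous_const.min ((continuous_id.div_const a).pow d)

lemma my_intW (d : ℕ) (hd : 1 ≤ d) (a c : ℝ) (ha : 0 < a) (hac : a ≤ c) :
    ∫ u in (0:ℝ)..c, W d (u / a) * u = a ^ 2 / ((d:ℝ) + 2) + (c ^ 2 - a ^ 2) / 2 := by
  have hWc : Continuous fun u : ℝ => W d (u / a) * u := (myW_cont d a).mul continuous_id
  have h1 : ∫ u in (0:ℝ)..a, W d (u / a) * u = a ^ 2 / ((d:ℝ) + 2) := by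
    have hcg : ∀ u ∈ Set.uIcc (0:ℝ) a, W d (u / a) * u = u ^ (d+1) * (a ^ d)⁻¹ := by
      intro u hu
      rw [Set.uIcc_of_le ha.le] at hu
      rw [myW_eq_pow (div_nonneg hu.1 ha.le) ((div_le_one ha).mpr hu.2), div_pow]
      field_simp
      ring
    rw [intervalIntegral.integral_congr hcg, intervalIntegral.integral_mul_const,
      integral_pow]
    have hz : (0:ℝ) ^ (d + 1 + 1) = 0 := zero_pow (by omega)
    rw [hz, sub_zero]
    have hapow : a ^ (d + 1 + 1) = a ^ d * a ^ 2 := by ring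
    have hane : a ^ d ≠ 0 := by positivity
    rw [hapow]
    push_cast
    field_simp
    ring
  have h2 : ∫ u in a..c, W d (u / a) * u = (c ^ 2 - a ^ 2) / 2 := by
    have hcg : ∀ u ∈ Set.uIcc a c, W d (u / a) * u = u := by
      intro u hu
      rw [Set.uIcc_of_le hac] at hu
      rw [myW_eq_one ((one_le_div ha).mpr hu.1), one_mul]
    rw [intervalIntegral.integral_congr hcg, integral_id]
  rw [← intervalIntegral.integral_add_adjacent_intervals
    (hWc.intervalIntegrable 0 a) (hWc.intervalIntegrable a c), h1, h2]

theorem stmt_7 (d : ℕ) (hd : 1 ≤ d) (x : Euc d) (t s : ℝ) (ht : 0 < t) (hts : t < s) :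
    ∫ y, hst d s t x y = (s ^ 2 - t ^ 2) / (2 * ((d : ℝ) + 2)) := by
  haveI : Nonempty (Fin d) := ⟨⟨0, hd⟩⟩
  haveI : Nontrivial (Euc d) := inferInstance
  have hs : 0 < s := ht.trans hts
  have hCd : 0 < Cd d := myCd_pos d hd
  have hdR : (0:ℝ) < d := by exact_mod_cast hd
  set f : ℝ → ℝ := fun u => (W d (u / t) - W d (u / s)) / (Cd d * u ^ (d - 1)) with hf_def
  set g : ℝ → ℝ := fun r => ∫ u in Set.Ioi r, f u with hg_def
  have hf_meas : Measurable f := by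
    apply Measurable.div
    · exact ((myW_cont d t).sub (myW_cont d s)).measurable
    · exact measurable_const.mul (measurable_id.pow_const _)
  have hf_zero : ∀ u, s ≤ u → f u = 0 := by
    intro u hu
    have h1 : (1:ℝ) ≤ u / t := (one_le_div ht).mpr (hts.le.trans hu)
    have h2 : (1:ℝ) ≤ u / s := (one_le_div hs).mpr hu
    simp [hf_def, myW_eq_one h1, myW_eq_one h2]
  have hf_nonneg : ∀ u, 0 < u → 0 ≤ f u := by
    intro u hu
    apply div_nonneg
    · have hle : u / s ≤ u / t := div_le_div_of_nonneg_left hu.le ht hts.le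
      have := min_le_min (le_refl (1:ℝ))
        (pow_le_pow_left₀ (div_nonneg hu.le hs.le) hle d)
      simpa [W, sub_nonneg] using this
    · positivity
  have hf_le : ∀ u, 0 < u → u ≤ s → f u ≤ s / (Cd d * t ^ d) := by
    intro u hu hus
    have hnum : W d (u / t) - W d (u / s) ≤ u ^ d / t ^ d := by
      have h1 : W d (u / t) ≤ (u / t) ^ d := min_le_right _ _
      have h2 : 0 ≤ W d (u / s) := myW_nonneg (div_nonneg hu.le hs.le)
      calc W d (u / t) - W d (u / s) ≤ W d (u / t) := by linarith
        _ ≤ (u / t) ^ d := h1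
        _ = u ^ d / t ^ d := div_pow u t d
    have hden : 0 < Cd d * u ^ (d - 1) := by positivity
    have hupow : u ^ d = u ^ (d - 1) * u := by
      rw [← pow_succ, Nat.sub_add_cancel hd]
    have key : (u ^ d / t ^ d) / (Cd d * u ^ (d - 1)) = u / (Cd d * t ^ d) := by
      have h1 : u ^ (d - 1) ≠ 0 := by positivity
      have h2 : t ^ d ≠ 0 := by positivity
      rw [hupow]; field_simp
    calc f u ≤ (u ^ d / t ^ d) / (Cd d * u ^ (d - 1)) :=
          (div_le_div_iff_of_pos_right hden).mpr hnum
      _ = u / (Cd d * t ^ d) := key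
      _ ≤ s / (Cd d * t ^ d) := by gcongr
  -- value of the one-dimensional moment integral
  have hJ : ∫ u in Set.Ioi (0:ℝ), (W d (u / t) - W d (u / s)) * u
      = t ^ 2 / ((d:ℝ) + 2) + (s ^ 2 - t ^ 2) / 2 - s ^ 2 / ((d:ℝ) + 2) := by
    have hcont : Continuous fun u : ℝ => (W d (u / t) - W d (u / s)) * u :=
      ((myW_cont d t).sub (myW_cont d s)).mul continuous_id
    have hG0 : Set.EqOn (fun u : ℝ => (W d (u / t) - W d (u / s)) * u) 0 (Set.Ioi s) := by
      intro u hu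
      have hu' : s ≤ u := (Set.mem_Ioi.mp hu).le
      have h1 : (1:ℝ) ≤ u / t := (one_le_div ht).mpr (hts.le.trans hu')
      have h2 : (1:ℝ) ≤ u / s := (one_le_div hs).mpr hu'
      simp [myW_eq_one h1, myW_eq_one h2]
    have hsplit : Set.Ioc (0:ℝ) s ∪ Set.Ioi s = Set.Ioi 0 := Set.Ioc_union_Ioi_eq_Ioi hs.le
    rw [← hsplit, setIntegral_union (Set.Ioc_disjoint_Ioi le_rfl) measurableSet_Ioi
      (hcont.integrableOn_Ioc)
      ((integrableOn_congr_fun hG0 measurableSet_Ioi).mpr (integrableOn_zero))]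
    rw [setIntegral_congr_fun measurableSet_Ioi hG0]
    simp only [Pi.zero_apply, integral_zero, add_zero]
    rw [← intervalIntegral.integral_of_le hs.le]
    have hsub : ∫ u in (0:ℝ)..s, (W d (u / t) - W d (u / s)) * u
        = (∫ u in (0:ℝ)..s, W d (u / t) * u) - ∫ u in (0:ℝ)..s, W d (u / s) * u := by
      have hdiff := intervalIntegral.integral_sub (f := fun u : ℝ => W d (u / t) * u)
        (g := fun u : ℝ => W d (u / s) * u) (μ := volume) (a := 0) (b := s)
        (((myW_cont d t).mul continuous_id).intervalIntegrable 0 s)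
        (((myW_cont d s).mul continuous_id).intervalIntegrable 0 s)
      rw [← hdiff]
      apply intervalIntegral.integral_congr
      intro u hu
      ring
    rw [hsub, my_intW d hd t s ht hts.le, my_intW d hd s s hs le_rfl]
    ring
  -- ∫ f u * u^d over (0,∞)
  have hfu : ∫ u in Set.Ioi (0:ℝ), f u * u ^ d
      = (1 / Cd d) * (t ^ 2 / ((d:ℝ) + 2) + (s ^ 2 - t ^ 2) / 2 - s ^ 2 / ((d:ℝ) + 2)) := by
    rw [← hJ, ← integral_const_mul]
    apply setIntegral_congr_fun measurableSet_Ioi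
    intro u hu
    have hu0 : (0:ℝ) < u := hu
    have hupow : u ^ d = u ^ (d - 1) * u := by
      rw [← pow_succ, Nat.sub_add_cancel hd]
    have h1 : u ^ (d - 1) ≠ 0 := by positivity
    simp only [hf_def]
    rw [hupow]
    field_simp
  -- Fubini step
  have hFub : ∫ r in Set.Ioi (0:ℝ), r ^ (d - 1) • g r
      = ∫ u in Set.Ioi (0:ℝ), f u * (u ^ d / (d:ℝ)) := by
    set F : ℝ → ℝ → ℝ := fun r u => if r < u then r ^ (d - 1) * f u else 0 with hF_def
    have hFm : Measurable (Function.uncurry F) := by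
      apply Measurable.ite (measurableSet_lt measurable_fst measurable_snd)
      · exact (measurable_fst.pow_const _).mul (hf_meas.comp measurable_snd)
      · exact measurable_const
    have hFint : Integrable (Function.uncurry F)
        ((volume.restrict (Set.Ioi 0)).prod (volume.restrict (Set.Ioi 0))) := by
      set M := s ^ (d - 1) * (s / (Cd d * t ^ d)) with hM
      have hM0 : 0 ≤ M := by positivity
      have hae : ∀ᵐ p : ℝ × ℝ ∂((volume.restrict (Set.Ioi 0)).prod (volume.restrict (Set.Ioi 0))),
          p ∈ Set.Ioi (0:ℝ) ×ˢ Set.Ioi (0:ℝ) := by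
        rw [Measure.prod_restrict]
        exact ae_restrict_mem (measurableSet_Ioi.prod measurableSet_Ioi)
      apply Integrable.mono'
        (g := (Set.Ioo (0:ℝ) s ×ˢ Set.Ioo (0:ℝ) s).indicator fun _ => M)
      · rw [integrable_indicator_iff (measurableSet_Ioo.prod measurableSet_Ioo)]
        apply (integrableOn_const_iff).mpr
        right
        calc ((volume.restrict (Set.Ioi 0)).prod (volume.restrict (Set.Ioi 0)))
              (Set.Ioo (0:ℝ) s ×ˢ Set.Ioo (0:ℝ) s)
            = volume.restrict (Set.Ioi 0) (Set.Ioo (0:ℝ) s)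
              * volume.restrict (Set.Ioi 0) (Set.Ioo (0:ℝ) s) := Measure.prod_prod _ _
          _ ≤ volume (Set.Ioo (0:ℝ) s) * volume (Set.Ioo (0:ℝ) s) := by
              rw [Measure.restrict_apply measurableSet_Ioo]
              gcongr <;> exact Set.inter_subset_left
          _ < ⊤ := by
              rw [Real.volume_Ioo]
              exact ENNReal.mul_lt_top ENNReal.ofReal_lt_top ENNReal.ofReal_lt_top
      · exact hFm.aestronglyMeasurable
      · filter_upwards [hae] with p hp
        obtain ⟨hp1, hp2⟩ := hp
        have hp1' : (0:ℝ) < p.1 := hp1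
        have hp2' : (0:ℝ) < p.2 := hp2
        have hind : (0:ℝ) ≤ (Set.Ioo (0:ℝ) s ×ˢ Set.Ioo (0:ℝ) s).indicator
            (fun _ => M) p := Set.indicator_apply_nonneg fun _ => hM0
        by_cases h12 : p.1 < p.2
        · by_cases h2s : p.2 < s
          · have hmem : p ∈ Set.Ioo (0:ℝ) s ×ˢ Set.Ioo (0:ℝ) s :=
              ⟨⟨hp1', h12.trans h2s⟩, ⟨hp2', h2s⟩⟩
            rw [Set.indicator_of_mem hmem]
            have hFval : Function.uncurry F p = p.1 ^ (d - 1) * f p.2 := by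
              simp [Function.uncurry, hF_def, h12]
            rw [hFval, Real.norm_eq_abs,
              abs_of_nonneg (mul_nonneg (by positivity) (hf_nonneg _ hp2'))]
            apply mul_le_mul
            · exact pow_le_pow_left₀ hp1'.le (h12.trans h2s).le _
            · exact hf_le p.2 hp2' h2s.le
            · exact hf_nonneg _ hp2'
            · positivity
          · have hFval : Function.uncurry F p = 0 := by
              simp [Function.uncurry, hF_def, h12, hf_zero p.2 (not_lt.mp h2s)]
            rw [hFval, norm_zero]
            exact hind
        · have hFval : Function.uncurry F p = 0 := by
            simp [Function.uncurry, hF_def, h12]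
          rw [hFval, norm_zero]
          exact hind
    have hL : Set.EqOn (fun r : ℝ => r ^ (d - 1) • g r)
        (fun r : ℝ => ∫ u in Set.Ioi (0:ℝ), F r u) (Set.Ioi 0) := by
      intro r hr
      have hr0 : (0:ℝ) < r := hr
      have hind : ∀ u : ℝ, F r u = (Set.Ioi r).indicator (fun u => r ^ (d - 1) * f u) u := by
        intro u
        simp [hF_def, Set.indicator_apply, Set.mem_Ioi]
      simp only [hind]
      rw [setIntegral_indicator measurableSet_Ioi, Set.Ioi_inter_Ioi,
        max_eq_right hr0.le, integral_const_mul]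
      simp [hg_def, smul_eq_mul]
    have hR : Set.EqOn (fun u : ℝ => ∫ r in Set.Ioi (0:ℝ), F r u)
        (fun u : ℝ => f u * (u ^ d / (d:ℝ))) (Set.Ioi 0) := by
      intro u hu
      have hu0 : (0:ℝ) < u := hu
      have hind : ∀ r : ℝ, F r u = (Set.Iio u).indicator (fun r => r ^ (d - 1) * f u) r := by
        intro r
        simp [hF_def, Set.indicator_apply, Set.mem_Iio]
      simp only [hind]
      rw [setIntegral_indicator measurableSet_Iio, Set.Ioi_inter_Iio,
        ← MeasureTheory.integral_Ioc_eq_integral_Ioo, ← intervalIntegral.integral_of_le hu0.le,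
        intervalIntegral.integral_mul_const, integral_pow]
      have hz : (0:ℝ) ^ (d - 1 + 1) = 0 := zero_pow (by omega)
      have hd1 : d - 1 + 1 = d := Nat.succ_pred_eq_of_pos hd
      have hc : ((d - 1 : ℕ) : ℝ) + 1 = (d:ℝ) := by
        rw [Nat.cast_sub hd]; push_cast; ring
      rw [hz, sub_zero, hd1, hc]
      ring
    calc ∫ r in Set.Ioi (0:ℝ), r ^ (d - 1) • g r
        = ∫ r in Set.Ioi (0:ℝ), ∫ u in Set.Ioi (0:ℝ), F r u :=
          setIntegral_congr_fun measurableSet_Ioi hL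
      _ = ∫ u in Set.Ioi (0:ℝ), ∫ r in Set.Ioi (0:ℝ), F r u :=
          integral_integral_swap hFint
      _ = ∫ u in Set.Ioi (0:ℝ), f u * (u ^ d / (d:ℝ)) :=
          setIntegral_congr_fun measurableSet_Ioi hR
  -- put it all together
  have hrw : ∀ y : Euc d, hst d s t x y = g (dist y x) := fun y => rfl
  have hball : (volume (ball (0:Euc d) 1)).toReal
      = Real.sqrt π ^ d / Real.Gamma ((d:ℝ) / 2 + 1) := by
    rw [EuclideanSpace.volume_ball, Fintype.card_fin]
    have hpos : (0:ℝ) ≤ Real.sqrt π ^ d / Real.Gamma ((d:ℝ) / 2 + 1) := by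
      have := Real.Gamma_pos_of_pos (show (0:ℝ) < (d:ℝ)/2 + 1 by positivity)
      positivity
    simp [ENNReal.toReal_ofReal hpos]
  have hsqrt : Real.sqrt π ^ d = π ^ ((d:ℝ) / 2) := by
    rw [Real.sqrt_eq_rpow, ← Real.rpow_natCast (π ^ ((1:ℝ)/2)) d,
      ← Real.rpow_mul Real.pi_pos.le]
    congr 1
    ring
  have hGam : Real.Gamma ((d:ℝ) / 2 + 1) = ((d:ℝ) / 2) * Real.Gamma ((d:ℝ) / 2) :=
    Real.Gamma_add_one (by positivity)
  have hGpos : 0 < Real.Gamma ((d:ℝ) / 2) := Real.Gamma_pos_of_pos (by positivity)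
  have hApos : 0 < π ^ ((d:ℝ) / 2) := Real.rpow_pos_of_pos Real.pi_pos _
  calc ∫ y, hst d s t x y
      = ∫ y : Euc d, g ‖y - x‖ := by simp_rw [hrw, dist_eq_norm]
    _ = ∫ y : Euc d, g ‖y‖ := integral_sub_right_eq_self (fun y => g ‖y‖) x
    _ = d • (volume (ball (0:Euc d) 1)).toReal
        • ∫ r in Set.Ioi (0:ℝ), r ^ (d - 1) • g r := by
        rw [MeasureTheory.integral_fun_norm_addHaar volume g, finrank_euclideanSpace,
          Fintype.card_fin]
        rfl
    _ = (d:ℝ) * ((volume (ball (0:Euc d) 1)).toReal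
        * ∫ u in Set.Ioi (0:ℝ), f u * (u ^ d / (d:ℝ))) := by
        rw [hFub, nsmul_eq_mul, smul_eq_mul]
    _ = (s ^ 2 - t ^ 2) / (2 * ((d:ℝ) + 2)) := by
        have hmul : ∫ u in Set.Ioi (0:ℝ), f u * (u ^ d / (d:ℝ))
            = (1 / (d:ℝ)) * ∫ u in Set.Ioi (0:ℝ), f u * u ^ d := by
          rw [← integral_const_mul]
          congr 1; ext u; ring
        rw [hmul, hfu, hball, hsqrt, hGam]
        unfold Cd
        have hd2 : ((d:ℝ) + 2) ≠ 0 := by positivity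
        field_simp
        ring

end
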